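/- arXiv:1912.00927 — 3 statements merged into one kernel-verified Lean document; each statement's English description precedes it below -/
import Mathlib

section
/- Let (C, E, s) be an extriangulated category satisfying Condition (WIC). Given a morphism of E-triangles (id_A, b, c) from A →x B →y C --δ--> to A →x' B' →y' C' --δ'-->, if c is a deflation then b is also a deflation. -/
open CategoryTheory Limits

universe w v u

/-- An extriangulated category structure on an additive category `𝒞`, in the sense of
Nakaoka–Palu: a biadditive `Ab`-valued functor `E` together with an additive realization,
encoded via the predicate `IsTriangle x y δ` meaning that `A ⟶x B ⟶y X` realizes
`δ ∈ E(X,A)`, satisfying (ET1)–(ET4) and their duals. -/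
structure ExtriangulatedStructure (𝒞 : Type u) [Category.{v} 𝒞] [Preadditive 𝒞]
    [HasBinaryBiproducts 𝒞] where
  E : 𝒞 → 𝒞 → AddCommGrpCat.{w}
  pull : ∀ {X' X A : 𝒞}, (X' ⟶ X) → E X A → E X' A
  push : ∀ {X A A' : 𝒞}, (A ⟶ A') → E X A → E X A'
  pull_id : ∀ {X A : 𝒞} (δ : E X A), pull (𝟙 X) δ = δ
  push_id : ∀ {X A : 𝒞} (δ : E X A), push (𝟙 A) δ = δ
  pull_comp : ∀ {X'' X' X A : 𝒞} (c' : X'' ⟶ X') (c : X' ⟶ X) (δ : E X A),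
      pull (c' ≫ c) δ = pull c' (pull c δ)
  push_comp : ∀ {X A A' A'' : 𝒞} (a : A ⟶ A') (a' : A' ⟶ A'') (δ : E X A),
      push (a ≫ a') δ = push a' (push a δ)
  pull_push : ∀ {X' X A A' : 𝒞} (c : X' ⟶ X) (a : A ⟶ A') (δ : E X A),
      pull c (push a δ) = push a (pull c δ)
  pull_add : ∀ {X' X A : 𝒞} (c : X' ⟶ X) (δ δ' : E X A),
      pull c (δ + δ') = pull c δ + pull c δ'
  push_add : ∀ {X A A' : 𝒞} (a : A ⟶ A') (δ δ' : E X A),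
      push a (δ + δ') = push a δ + push a δ'
  add_pull : ∀ {X' X A : 𝒞} (c c' : X' ⟶ X) (δ : E X A),
      pull (c + c') δ = pull c δ + pull c' δ
  add_push : ∀ {X A A' : 𝒞} (a a' : A ⟶ A') (δ : E X A),
      push (a + a') δ = push a δ + push a' δ
  IsTriangle : ∀ {A B X : 𝒞}, (A ⟶ B) → (B ⟶ X) → E X A → Prop
  realize_exists : ∀ {X A : 𝒞} (δ : E X A),
      ∃ (B : 𝒞) (x : A ⟶ B) (y : B ⟶ X), IsTriangle x y δ
  realize_zero : ∀ (A X : 𝒞),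
      IsTriangle (biprod.inl : A ⟶ A ⊞ X) (biprod.snd : A ⊞ X ⟶ X) (0 : E X A)
  realize_sum : ∀ {A B X A' B' X' : 𝒞} (x : A ⟶ B) (y : B ⟶ X) (δ : E X A)
      (x' : A' ⟶ B') (y' : B' ⟶ X') (δ' : E X' A'),
      IsTriangle x y δ → IsTriangle x' y' δ' →
      IsTriangle (biprod.map x x') (biprod.map y y')
        (push biprod.inl (pull biprod.fst δ) + push biprod.inr (pull biprod.snd δ'))
  realize_iso : ∀ {A B B' X : 𝒞} (x : A ⟶ B) (y : B ⟶ X) (δ : E X A) (b : B ≅ B'),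
      IsTriangle x y δ → IsTriangle (x ≫ b.hom) (b.inv ≫ y) δ
  realize_mor : ∀ {A B X A' B' X' : 𝒞} {x : A ⟶ B} {y : B ⟶ X} {δ : E X A}
      {x' : A' ⟶ B'} {y' : B' ⟶ X'} {δ' : E X' A'} (a : A ⟶ A') (c : X ⟶ X'),
      IsTriangle x y δ → IsTriangle x' y' δ' → push a δ = pull c δ' →
      ∃ b : B ⟶ B', x ≫ b = a ≫ x' ∧ y ≫ c = b ≫ y'
  ET3 : ∀ {A B X A' B' X' : 𝒞} {x : A ⟶ B} {y : B ⟶ X} {δ : E X A}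
      {x' : A' ⟶ B'} {y' : B' ⟶ X'} {δ' : E X' A'} (a : A ⟶ A') (b : B ⟶ B'),
      IsTriangle x y δ → IsTriangle x' y' δ' → x ≫ b = a ≫ x' →
      ∃ c : X ⟶ X', push a δ = pull c δ' ∧ y ≫ c = b ≫ y'
  ET3op : ∀ {A B X A' B' X' : 𝒞} {x : A ⟶ B} {y : B ⟶ X} {δ : E X A}
      {x' : A' ⟶ B'} {y' : B' ⟶ X'} {δ' : E X' A'} (b : B ⟶ B') (c : X ⟶ X'),
      IsTriangle x y δ → IsTriangle x' y' δ' → y ≫ c = b ≫ y' →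
      ∃ a : A ⟶ A', push a δ = pull c δ' ∧ x ≫ b = a ≫ x'
  ET4 : ∀ {A B D Cv F : 𝒞} (f : A ⟶ B) (f' : B ⟶ D) (δ : E D A)
      (g : B ⟶ Cv) (g' : Cv ⟶ F) (δ' : E F B),
      IsTriangle f f' δ → IsTriangle g g' δ' →
      ∃ (E₀ : 𝒞) (h : A ⟶ Cv) (h' : Cv ⟶ E₀) (d : D ⟶ E₀) (e : E₀ ⟶ F) (δ'' : E E₀ A),
        IsTriangle h h' δ'' ∧ IsTriangle d e (push f' δ') ∧
        h = f ≫ g ∧ f' ≫ d = g ≫ h' ∧ g' = h' ≫ e ∧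
        pull d δ'' = δ ∧ push f δ'' = pull e δ'
  ET4op : ∀ {D B A F Cv : 𝒞} (i : D ⟶ B) (p : B ⟶ A) (δ : E A D)
      (j : F ⟶ Cv) (q : Cv ⟶ B) (δ' : E B F),
      IsTriangle i p δ → IsTriangle j q δ' →
      ∃ (E₀ : 𝒞) (i' : E₀ ⟶ Cv) (p' : Cv ⟶ A) (m : F ⟶ E₀) (n : E₀ ⟶ D) (δ'' : E A E₀),
        IsTriangle i' p' δ'' ∧ IsTriangle m n (pull i δ') ∧
        p' = q ≫ p ∧ i' ≫ q = n ≫ i ∧ j = m ≫ i' ∧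
        push n δ'' = δ ∧ pull p δ'' = push m δ'

namespace ExtriangulatedStructure

variable {𝒞 : Type u} [Category.{v} 𝒞] [Preadditive 𝒞] [HasBinaryBiproducts 𝒞]
variable (S : ExtriangulatedStructure.{w} 𝒞)

/-- A morphism is an inflation if it occurs as the first map of some `E`-triangle. -/
def IsInflation {A B : 𝒞} (f : A ⟶ B) : Prop :=
  ∃ (X : 𝒞) (g : B ⟶ X) (δ : S.E X A), S.IsTriangle f g δ

/-- A morphism is a deflation if it occurs as the second map of some `E`-triangle. -/
def IsDeflation {B X : 𝒞} (g : B ⟶ X) : Prop :=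
  ∃ (A : 𝒞) (f : A ⟶ B) (δ : S.E X A), S.IsTriangle f g δ

/-- Condition (WIC). -/
def WIC : Prop :=
  (∀ {A B X : 𝒞} (f : A ⟶ B) (g : B ⟶ X), S.IsInflation (f ≫ g) → S.IsInflation f) ∧
  (∀ {A B X : 𝒞} (f : A ⟶ B) (g : B ⟶ X), S.IsDeflation (f ≫ g) → S.IsDeflation g)

/-- `(a, b, c)` is a morphism of `E`-triangles. -/
def IsTriangleMor {A B X A' B' X' : 𝒞} (x : A ⟶ B) (y : B ⟶ X) (δ : S.E X A)
    (x' : A' ⟶ B') (y' : B' ⟶ X') (δ' : S.E X' A')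
    (a : A ⟶ A') (b : B ⟶ B') (c : X ⟶ X') : Prop :=
  x ≫ b = a ≫ x' ∧ y ≫ c = b ≫ y' ∧ S.push a δ = S.pull c δ'

/-- A cotorsion pair `(𝒬, ℛ)`: `E(𝒬, ℛ) = 0` and every object admits the two
approximation `E`-triangles. -/
def CotorsionPair (𝒬 ℛ : Set 𝒞) : Prop :=
  (∀ (Q R : 𝒞), Q ∈ 𝒬 → R ∈ ℛ → ∀ δ : S.E Q R, δ = 0) ∧
  (∀ X : 𝒞, ∃ (R Q : 𝒞) (f : R ⟶ Q) (g : Q ⟶ X) (δ : S.E X R),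
      S.IsTriangle f g δ ∧ Q ∈ 𝒬 ∧ R ∈ ℛ) ∧
  (∀ X : 𝒞, ∃ (R Q : 𝒞) (f : X ⟶ R) (g : R ⟶ Q) (δ : S.E Q X),
      S.IsTriangle f g δ ∧ Q ∈ 𝒬 ∧ R ∈ ℛ)

/-- A cotorsion pair is hereditary if `𝒬` is closed under cocones of deflations and
`ℛ` is closed under cones of inflations. -/
def Hereditary (𝒬 ℛ : Set 𝒞) : Prop :=
  (∀ {A B X : 𝒞} (f : A ⟶ B) (g : B ⟶ X) (δ : S.E X A),
      S.IsTriangle f g δ → B ∈ 𝒬 → X ∈ 𝒬 → A ∈ 𝒬) ∧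
  (∀ {A B X : 𝒞} (f : A ⟶ B) (g : B ⟶ X) (δ : S.E X A),
      S.IsTriangle f g δ → A ∈ ℛ → B ∈ ℛ → X ∈ ℛ)

/-- A class of objects is thick: closed under direct summands and satisfying the
2-out-of-3 property on `E`-triangles. -/
def Thick (𝒲 : Set 𝒞) : Prop :=
  (∀ {X Y : 𝒞}, Y ∈ 𝒲 → (∃ (i : X ⟶ Y) (p : Y ⟶ X), i ≫ p = 𝟙 X) → X ∈ 𝒲) ∧
  (∀ {A B X : 𝒞} (f : A ⟶ B) (g : B ⟶ X) (δ : S.E X A), S.IsTriangle f g δ →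
    (A ∈ 𝒲 → B ∈ 𝒲 → X ∈ 𝒲) ∧ (A ∈ 𝒲 → X ∈ 𝒲 → B ∈ 𝒲) ∧ (B ∈ 𝒲 → X ∈ 𝒲 → A ∈ 𝒲))

/-- `(𝒬, 𝒲, ℛ)` is a Hovey triple. -/
def HoveyTriple (𝒬 𝒲 ℛ : Set 𝒞) : Prop :=
  S.Thick 𝒲 ∧ S.CotorsionPair 𝒬 (𝒲 ∩ ℛ) ∧ S.CotorsionPair (𝒬 ∩ 𝒲) ℛ

end ExtriangulatedStructure

open CategoryTheory Limits in
/-- Exactness of `Hom(T, -)`: a map into the middle of an `E`-triangle that kills the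
deflation factors through the inflation. -/
theorem ExtriangulatedStructure.factor_thru {𝒞 : Type u} [Category.{v} 𝒞] [Preadditive 𝒞]
    [HasBinaryBiproducts 𝒞] (S : ExtriangulatedStructure.{w} 𝒞)
    {A B X T : 𝒞} {x : A ⟶ B} {y : B ⟶ X} {δ : S.E X A}
    (hT : S.IsTriangle x y δ) (t : T ⟶ B) (ht : t ≫ y = 0) :
    ∃ u : T ⟶ A, t = u ≫ x := by
  obtain ⟨a, -, ha⟩ := S.ET3op (biprod.desc t 0) (0 : X ⟶ X) (S.realize_zero T X) hT
    (by ext <;> simp [ht])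
  exact ⟨a, by simpa using ha⟩

open CategoryTheory Limits in
/-- under (WIC), in a morphism of E-triangles `(𝟙 A, b, c)`,
if `c` is a deflation then so is `b`. -/
theorem stmt1 {𝒞 : Type u} [Category.{v} 𝒞] [Preadditive 𝒞] [HasBinaryBiproducts 𝒞]
    (S : ExtriangulatedStructure.{w} 𝒞) (hWIC : S.WIC)
    {A B X B' X' : 𝒞} (x : A ⟶ B) (y : B ⟶ X) (δ : S.E X A)
    (x' : A ⟶ B') (y' : B' ⟶ X') (δ' : S.E X' A)
    (hT : S.IsTriangle x y δ) (hT' : S.IsTriangle x' y' δ')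
    (b : B ⟶ B') (c : X ⟶ X')
    (hmor : S.IsTriangleMor x y δ x' y' δ' (𝟙 A) b c)
    (hc : S.IsDeflation c) : S.IsDeflation b := by
  obtain ⟨K, k, ε, hK⟩ := hc
  -- compose the deflations `y` and `c` using (ET4op): get a triangle `E₀ → B → X'`
  obtain ⟨E₀, i', p', m, n, δ'', hT1, hT2, hp', hcomm1, hx, hpushn, hpullc⟩ :=
    S.ET4op k c ε x y δ hK hT
  have hy'c : y ≫ c = b ≫ y' := hmor.2.1
  have hT1' : S.IsTriangle i' (b ≫ y') δ'' := by
    rw [hp', hy'c] at hT1; exact hT1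
  -- realize the pullback of `δ''` along `y'`
  obtain ⟨P, k₃, p, hP⟩ := S.realize_exists (S.pull y' δ'')
  -- comparison map `s : P ⟶ B`
  obtain ⟨s, hs1, hs2⟩ := S.realize_mor (𝟙 E₀) y' hP hT1' (by rw [S.push_id])
  -- `s ≫ b - p` kills `y'`, hence factors through `x'`
  have ht0 : (s ≫ b - p) ≫ y' = 0 := by
    rw [Preadditive.sub_comp, Category.assoc, ← hs2, sub_self]
  obtain ⟨u, hu⟩ := S.factor_thru hT' (s ≫ b - p) ht0
  have hxb : x ≫ b = x' := by simpa using hmor.1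
  have key : (s - u ≫ x) ≫ b = p := by
    rw [Preadditive.sub_comp, Category.assoc, hxb, ← hu]
    abel
  exact hWIC.2 (s - u ≫ x) b (key ▸ ⟨E₀, k₃, S.pull y' δ'', hP⟩)
end

section
/- Let (C, E, s) be an extriangulated category satisfying Condition (WIC). Given a morphism of E-triangles (a, b, c) from A →x B →y C --δ--> to A' →x' B' →y' C' --δ'-->, if both a and c are deflations, then there exists a deflation b': B → B' such that (a, b', c) is also a morphism of E-triangles between the same two E-triangles. -/
open CategoryTheory Limits

universe w v u

namespace ExtriangulatedStructure

open CategoryTheory Limits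

variable {𝒞 : Type u} [Category.{v} 𝒞] [Preadditive 𝒞] [HasBinaryBiproducts 𝒞]
variable (S : ExtriangulatedStructure.{w} 𝒞)

/-! ### Additivity consequences -/

lemma pull_zeroE {X' X A : 𝒞} (c : X' ⟶ X) : S.pull c (0 : S.E X A) = 0 := by
  have h := S.pull_add c (0 : S.E X A) 0
  rw [add_zero] at h
  exact left_eq_add.mp h

lemma push_zeroE {X A A' : 𝒞} (a : A ⟶ A') : S.push a (0 : S.E X A) = 0 := by
  have h := S.push_add a (0 : S.E X A) 0
  rw [add_zero] at h
  exact left_eq_add.mp h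

lemma zero_pullE {X' X A : 𝒞} (δ : S.E X A) : S.pull (0 : X' ⟶ X) δ = 0 := by
  have h := S.add_pull (0 : X' ⟶ X) 0 δ
  rw [add_zero] at h
  exact left_eq_add.mp h

lemma zero_pushE {X A A' : 𝒞} (δ : S.E X A) : S.push (0 : A ⟶ A') δ = 0 := by
  have h := S.add_push (0 : A ⟶ A') 0 δ
  rw [add_zero] at h
  exact left_eq_add.mp h

lemma neg_pushE {X A A' : 𝒞} (a : A ⟶ A') (δ : S.E X A) :
    S.push (-a) δ = - S.push a δ := by
  have h := S.add_push (-a) a δ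
  rw [neg_add_cancel, S.zero_pushE] at h
  exact eq_neg_of_add_eq_zero_left h.symm

lemma pull_negE {X' X A : 𝒞} (c : X' ⟶ X) (δ : S.E X A) :
    S.pull c (-δ) = - S.pull c δ := by
  have h := S.pull_add c (-δ) δ
  rw [neg_add_cancel, S.pull_zeroE] at h
  exact eq_neg_of_add_eq_zero_left h.symm

lemma pull_subE {X' X A : 𝒞} (c : X' ⟶ X) (δ δ' : S.E X A) :
    S.pull c (δ - δ') = S.pull c δ - S.pull c δ' := by
  rw [sub_eq_add_neg, S.pull_add, S.pull_negE, ← sub_eq_add_neg]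

lemma E_decomp {X A B : 𝒞} (δ : S.E X (A ⊞ B)) :
    δ = S.push biprod.inl (S.push biprod.fst δ) +
        S.push biprod.inr (S.push biprod.snd δ) := by
  rw [← S.push_comp, ← S.push_comp, ← S.add_push, biprod.total, S.push_id]

/-! ### Basic consequences of the axioms -/

lemma comp_eq_zero {A B X : 𝒞} {x : A ⟶ B} {y : B ⟶ X} {δ : S.E X A}
    (hT : S.IsTriangle x y δ) : x ≫ y = 0 := by
  obtain ⟨b, hb1, hb2⟩ := S.realize_mor (𝟙 A) (0 : X ⟶ X) (S.realize_zero A X) hT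
    (by rw [S.push_zeroE, S.zero_pullE])
  have h : x ≫ y = (biprod.inl ≫ b) ≫ y := by rw [hb1, Category.id_comp]
  rw [h, Category.assoc, ← hb2, comp_zero, comp_zero]

lemma push_inflation_zero {A B X : 𝒞} {x : A ⟶ B} {y : B ⟶ X} {δ : S.E X A}
    (hT : S.IsTriangle x y δ) : S.push x δ = 0 := by
  obtain ⟨c₀, hc1, _⟩ := S.ET3 x (biprod.inl : B ⟶ B ⊞ B) hT (S.realize_zero B B) rfl
  rw [hc1, S.pull_zeroE]

lemma pull_deflation_zero {A B X : 𝒞} {x : A ⟶ B} {y : B ⟶ X} {δ : S.E X A}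
    (hT : S.IsTriangle x y δ) : S.pull y δ = 0 := by
  obtain ⟨a₀, ha1, _⟩ := S.ET3op (biprod.snd : A ⊞ B ⟶ B) y (S.realize_zero A B) hT rfl
  rw [← ha1, S.push_zeroE]

lemma factor_of_comp_zero {A B X T : 𝒞} {x : A ⟶ B} {y : B ⟶ X} {δ : S.E X A}
    (hT : S.IsTriangle x y δ) (g : B ⟶ T) (hg : x ≫ g = 0) :
    ∃ h : X ⟶ T, y ≫ h = g := by
  obtain ⟨c₀, _, hc2⟩ := S.ET3 x (biprod.lift (𝟙 B) g) hT (S.realize_zero B T)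
    (by apply biprod.hom_ext <;> simp [hg])
  exact ⟨c₀, by rw [hc2, biprod.lift_snd]⟩

/-! ### split triangles -/

lemma triangle_inr_fst (A X : 𝒞) :
    S.IsTriangle (biprod.inr : X ⟶ A ⊞ X) (biprod.fst : A ⊞ X ⟶ A) (0 : S.E A X) := by
  have e1 : (biprod.inl : X ⟶ X ⊞ A) ≫ biprod.desc biprod.inr biprod.inl
      = (biprod.inr : X ⟶ A ⊞ X) := biprod.inl_desc _ _
  have e2 : (biprod.desc biprod.inr biprod.inl : A ⊞ X ⟶ X ⊞ A) ≫ biprod.snd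
      = biprod.fst := by apply biprod.hom_ext' <;> simp
  rw [← e1, ← e2]
  exact S.realize_iso _ _ _
    ⟨biprod.desc biprod.inr biprod.inl, biprod.desc biprod.inr biprod.inl,
      by apply biprod.hom_ext' <;> simp, by apply biprod.hom_ext' <;> simp⟩
    (S.realize_zero X A)

/-! ### WIC consequences -/

lemma isDeflation_id (hWIC : S.WIC) (B : 𝒞) : S.IsDeflation (𝟙 B) := by
  refine hWIC.2 (biprod.snd : B ⊞ B ⟶ B) (𝟙 B) ?_
  rw [Category.comp_id]
  exact ⟨B, biprod.inl, 0, S.realize_zero B B⟩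

lemma isDeflation_of_isIso (hWIC : S.WIC) {Z B : 𝒞} (u : Z ⟶ B) (h : IsIso u) :
    S.IsDeflation u := by
  refine hWIC.2 (inv u) u ?_
  rw [IsIso.inv_hom_id]
  exact S.isDeflation_id hWIC B

lemma isInflation_id (hWIC : S.WIC) (B : 𝒞) : S.IsInflation (𝟙 B) := by
  refine hWIC.1 (𝟙 B) (biprod.inl : B ⟶ B ⊞ B) ?_
  rw [Category.id_comp]
  exact ⟨B, biprod.snd, 0, S.realize_zero B B⟩

lemma isDeflation_comp {Cv B A : 𝒞} {q : Cv ⟶ B} {p : B ⟶ A}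
    (hq : S.IsDeflation q) (hp : S.IsDeflation p) : S.IsDeflation (q ≫ p) := by
  obtain ⟨F, j, δq, hTq⟩ := hq
  obtain ⟨D, i, δp, hTp⟩ := hp
  obtain ⟨E₀, i', p', m, n, δ'', h1, _, h3, _⟩ := S.ET4op i p δp j q δq hTp hTq
  exact ⟨E₀, i', δ'', by rwa [h3] at h1⟩

/-! ### uniqueness of realizations up to isomorphism -/

lemma endo_isIso {A B X : 𝒞} {x : A ⟶ B} {y : B ⟶ X} {δ : S.E X A}
    (hT : S.IsTriangle x y δ) (w : B ⟶ B) (hx : x ≫ w = x) (hy : w ≫ y = y) :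
    IsIso w := by
  obtain ⟨h, hh⟩ := S.factor_of_comp_zero hT (𝟙 B - w)
    (by rw [Preadditive.comp_sub, Category.comp_id, hx, sub_self])
  have hny : (𝟙 B - w) ≫ y = 0 := by
    rw [Preadditive.sub_comp, Category.id_comp, hy, sub_self]
  have hny' : (y ≫ h) ≫ y = 0 := by rw [hh]; exact hny
  have hn2 : (𝟙 B - w) ≫ (𝟙 B - w) = 0 := by
    rw [← hh, ← Category.assoc, hny', zero_comp]
  have h' := hn2
  simp only [Preadditive.sub_comp, Preadditive.comp_sub, Category.id_comp,
    Category.comp_id] at h'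
  have hww : w ≫ w = w - (𝟙 B - w) := by rw [sub_eq_zero.mp h']; abel
  refine ⟨⟨𝟙 B + (𝟙 B - w), ?_, ?_⟩⟩
  · simp only [Preadditive.comp_add, Preadditive.comp_sub, Category.comp_id, hww]
    abel
  · simp only [Preadditive.add_comp, Preadditive.sub_comp, Category.id_comp, hww]
    abel

lemma mor_isIso {A₁ B₁ C₁ A₂ B₂ C₂ : 𝒞} {x₁ : A₁ ⟶ B₁} {y₁ : B₁ ⟶ C₁} {δ₁ : S.E C₁ A₁}
    {x₂ : A₂ ⟶ B₂} {y₂ : B₂ ⟶ C₂} {δ₂ : S.E C₂ A₂}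
    (hT₁ : S.IsTriangle x₁ y₁ δ₁) (hT₂ : S.IsTriangle x₂ y₂ δ₂)
    (α : A₁ ⟶ A₂) (α' : A₂ ⟶ A₁) (hα : α ≫ α' = 𝟙 A₁) (hα' : α' ≫ α = 𝟙 A₂)
    (γ : C₁ ⟶ C₂) (γ' : C₂ ⟶ C₁) (hγ : γ ≫ γ' = 𝟙 C₁) (hγ' : γ' ≫ γ = 𝟙 C₂)
    (β : B₁ ⟶ B₂) (h1 : x₁ ≫ β = α ≫ x₂) (h2 : y₁ ≫ γ = β ≫ y₂)
    (h3 : S.push α δ₁ = S.pull γ δ₂) : IsIso β := by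
  have hcond : S.push α' δ₂ = S.pull γ' δ₁ := by
    have e1 : S.push α (S.pull γ' δ₁) = δ₂ := by
      rw [← S.pull_push, h3, ← S.pull_comp, hγ', S.pull_id]
    calc S.push α' δ₂ = S.push α' (S.push α (S.pull γ' δ₁)) := by rw [e1]
    _ = S.push (α ≫ α') (S.pull γ' δ₁) := (S.push_comp _ _ _).symm
    _ = S.pull γ' δ₁ := by rw [hα, S.push_id]
  obtain ⟨β', hb1, hb2⟩ := S.realize_mor α' γ' hT₂ hT₁ hcond
  have hw : IsIso (β ≫ β') := by
    refine S.endo_isIso hT₁ _ ?_ ?_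
    · rw [← Category.assoc, h1, Category.assoc, hb1, ← Category.assoc, hα,
        Category.id_comp]
    · rw [Category.assoc, ← hb2, ← Category.assoc, ← h2, Category.assoc, hγ,
        Category.comp_id]
  have hw' : IsIso (β' ≫ β) := by
    refine S.endo_isIso hT₂ _ ?_ ?_
    · rw [← Category.assoc, hb1, Category.assoc, h1, ← Category.assoc, hα',
        Category.id_comp]
    · rw [Category.assoc, ← h2, ← Category.assoc, ← hb2, Category.assoc, hγ',
        Category.comp_id]
  have hr : β ≫ (β' ≫ inv (β ≫ β')) = 𝟙 _ := by
    rw [← Category.assoc]; exact IsIso.hom_inv_id _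
  have hl : (inv (β' ≫ β) ≫ β') ≫ β = 𝟙 _ := by
    rw [Category.assoc]; exact IsIso.inv_hom_id _
  have heq : inv (β' ≫ β) ≫ β' = β' ≫ inv (β ≫ β') := by
    calc inv (β' ≫ β) ≫ β'
        = (inv (β' ≫ β) ≫ β') ≫ (β ≫ (β' ≫ inv (β ≫ β'))) := by
          rw [hr, Category.comp_id]
    _ = ((inv (β' ≫ β) ≫ β') ≫ β) ≫ (β' ≫ inv (β ≫ β')) := by
          simp only [Category.assoc]
    _ = β' ≫ inv (β ≫ β') := by rw [hl, Category.id_comp]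
  exact ⟨⟨β' ≫ inv (β ≫ β'), hr, by rw [← heq]; exact hl⟩⟩

lemma realization_iso {A B₁ B₂ X : 𝒞} {x₁ : A ⟶ B₁} {y₁ : B₁ ⟶ X} {x₂ : A ⟶ B₂}
    {y₂ : B₂ ⟶ X} {δ : S.E X A}
    (hT₁ : S.IsTriangle x₁ y₁ δ) (hT₂ : S.IsTriangle x₂ y₂ δ) :
    ∃ v : B₁ ⟶ B₂, IsIso v ∧ x₁ ≫ v = x₂ ∧ v ≫ y₂ = y₁ := by
  obtain ⟨v, hv1, hv2⟩ := S.realize_mor (𝟙 A) (𝟙 X) hT₁ hT₂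
    (by rw [S.push_id, S.pull_id])
  rw [Category.id_comp] at hv1
  rw [Category.comp_id] at hv2
  refine ⟨v, ?_, hv1, hv2.symm⟩
  exact S.mor_isIso hT₁ hT₂ (𝟙 A) (𝟙 A) (Category.id_comp _) (Category.id_comp _)
    (𝟙 X) (𝟙 X) (Category.id_comp _) (Category.id_comp _) v
    (by rw [hv1, Category.id_comp]) (by rw [Category.comp_id, hv2])
    (by rw [S.push_id, S.pull_id])

/-- transport of a triangle along an isomorphism of the cone -/
lemma triangle_iso_cone {A B C C' : 𝒞} {x : A ⟶ B} {y : B ⟶ C} {δ : S.E C A}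
    (hT : S.IsTriangle x y δ)
    (γ : C ⟶ C') (γ' : C' ⟶ C) (hγ : γ ≫ γ' = 𝟙 C) (hγ' : γ' ≫ γ = 𝟙 C') :
    S.IsTriangle x (y ≫ γ) (S.pull γ' δ) := by
  obtain ⟨Q, s, t, hQ⟩ := S.realize_exists (S.pull γ' δ)
  have hcond : S.push (𝟙 A) δ = S.pull γ (S.pull γ' δ) := by
    rw [S.push_id, ← S.pull_comp, hγ, S.pull_id]
  obtain ⟨β, hb1, hb2⟩ := S.realize_mor (𝟙 A) γ hT hQ hcond
  rw [Category.id_comp] at hb1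
  have hiso : IsIso β := S.mor_isIso hT hQ (𝟙 A) (𝟙 A) (Category.id_comp _)
    (Category.id_comp _) γ γ' hγ hγ' β (by rw [hb1, Category.id_comp]) hb2 hcond
  have h := S.realize_iso s t (S.pull γ' δ) (asIso β).symm hQ
  simp only [Iso.symm_hom, Iso.symm_inv, asIso_hom, asIso_inv] at h
  have hs : s ≫ inv β = x := by rw [← hb1, Category.assoc, IsIso.hom_inv_id,
    Category.comp_id]
  rwa [hs, ← hb2] at h

/-- transport of a triangle along an isomorphism of the fiber -/
lemma triangle_iso_fiber {A A'' B C : 𝒞} {x : A ⟶ B} {y : B ⟶ C} {δ : S.E C A}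
    (hT : S.IsTriangle x y δ)
    (α : A ⟶ A'') (α' : A'' ⟶ A) (hα : α ≫ α' = 𝟙 A) (hα' : α' ≫ α = 𝟙 A'') :
    S.IsTriangle (α' ≫ x) y (S.push α δ) := by
  obtain ⟨Q, s, t, hQ⟩ := S.realize_exists (S.push α δ)
  have hcond : S.push α δ = S.pull (𝟙 C) (S.push α δ) := by rw [S.pull_id]
  obtain ⟨β, hb1, hb2⟩ := S.realize_mor α (𝟙 C) hT hQ hcond
  rw [Category.comp_id] at hb2
  have hiso : IsIso β := S.mor_isIso hT hQ α α' hα hα' (𝟙 C) (𝟙 C)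
    (Category.id_comp _) (Category.id_comp _) β hb1
    (by rw [hb2, Category.comp_id]) hcond
  have h := S.realize_iso s t (S.push α δ) (asIso β).symm hQ
  simp only [Iso.symm_hom, Iso.symm_inv, asIso_hom, asIso_inv] at h
  have hs : s ≫ inv β = α' ≫ x := by
    have : s = α' ≫ x ≫ β := by
      rw [hb1, ← Category.assoc, hα', Category.id_comp]
    rw [this]
    simp
  rwa [hs, ← hb2] at h

/-- exactness of `Hom(F,-) → E(X',-) → E(X,-)` against a conflation `F → X → X'`. -/
lemma E_exact {F Xo X' A' : 𝒞} {f : F ⟶ Xo} {c : Xo ⟶ X'} {ε : S.E X' F}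
    (hT : S.IsTriangle f c ε) (θ : S.E X' A') (hθ : S.pull c θ = 0) :
    ∃ h : F ⟶ A', θ = S.push h ε := by
  obtain ⟨Sobj, s, t, hS⟩ := S.realize_exists θ
  obtain ⟨b, hb1, hb2⟩ := S.realize_mor (𝟙 A') c (S.realize_zero A' Xo) hS
    (by rw [S.push_zeroE, hθ])
  have hj : (biprod.inr ≫ b) ≫ t = c := by
    rw [Category.assoc, ← hb2, ← Category.assoc, biprod.inr_snd, Category.id_comp]
  obtain ⟨h, hh1, _⟩ := S.ET3op (biprod.inr ≫ b) (𝟙 X') hT hS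
    (by rw [Category.comp_id, hj])
  rw [S.pull_id] at hh1
  exact ⟨h, hh1.symm⟩

end ExtriangulatedStructure

open CategoryTheory Limits in
/-- under (WIC), in a morphism of E-triangles `(a, b, c)` with `a` and `c`
deflations, there exists a deflation `b'` making `(a, b', c)` a morphism of E-triangles. -/
theorem stmt2 {𝒞 : Type u} [Category.{v} 𝒞] [Preadditive 𝒞] [HasBinaryBiproducts 𝒞]
    (S : ExtriangulatedStructure.{w} 𝒞) (hWIC : S.WIC)
    {A B X A' B' X' : 𝒞} (x : A ⟶ B) (y : B ⟶ X) (δ : S.E X A)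
    (x' : A' ⟶ B') (y' : B' ⟶ X') (δ' : S.E X' A')
    (hT : S.IsTriangle x y δ) (hT' : S.IsTriangle x' y' δ')
    (a : A ⟶ A') (b : B ⟶ B') (c : X ⟶ X')
    (hmor : S.IsTriangleMor x y δ x' y' δ' a b c)
    (ha : S.IsDeflation a) (hc : S.IsDeflation c) :
    ∃ b' : B ⟶ B', S.IsDeflation b' ∧ S.IsTriangleMor x y δ x' y' δ' a b' c := by
  obtain ⟨hm1, hm2, hm3⟩ := hmor
  obtain ⟨K, k, κ, hTa⟩ := ha
  obtain ⟨F, f, ε, hTc⟩ := hc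
  obtain ⟨ZB, iB, δB, hTidB⟩ := S.isDeflation_id hWIC B
  -- the identity of `A'` is an inflation; its cone is a zero object
  obtain ⟨W₀, w₀, δ₀, hT1A⟩ := S.isInflation_id hWIC A'
  have hw₀ : w₀ = 0 := by
    have h0 := S.comp_eq_zero hT1A; rwa [Category.id_comp] at h0
  have hδ₀ : δ₀ = 0 := by
    have h0 := S.push_inflation_zero hT1A; rwa [S.push_id] at h0
  have hW₀ : (𝟙 W₀ : W₀ ⟶ W₀) = 0 := by
    obtain ⟨p, hp1, hp2⟩ := S.realize_mor (𝟙 A') (𝟙 W₀) (S.realize_zero A' W₀) hT1A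
      (by rw [S.push_zeroE, S.pull_id, hδ₀])
    have hsnd : (biprod.snd : A' ⊞ W₀ ⟶ W₀) = 0 := by
      rw [← Category.comp_id (biprod.snd : A' ⊞ W₀ ⟶ W₀), hp2, hw₀, comp_zero]
    calc (𝟙 W₀ : W₀ ⟶ W₀) = biprod.inr ≫ (biprod.snd : A' ⊞ W₀ ⟶ W₀) :=
          (biprod.inr_snd).symm
    _ = 0 := by rw [hsnd, comp_zero]
  -- Step 1 : homotopy pushout of `δ` along `a`, by (ET4)
  have hTv : S.IsTriangle (biprod.lift (𝟙 A) (-a)) (biprod.desc a (𝟙 A'))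
      (0 : S.E A' A) := by
    have e1 : (biprod.inl : A ⟶ A ⊞ A') ≫
        biprod.desc (biprod.lift (𝟙 A) (-a)) biprod.inr
        = biprod.lift (𝟙 A) (-a) := biprod.inl_desc _ _
    have e2 : (biprod.desc (biprod.lift (𝟙 A) a) biprod.inr : A ⊞ A' ⟶ A ⊞ A') ≫
        biprod.snd = biprod.desc a (𝟙 A') := by apply biprod.hom_ext' <;> simp
    rw [← e1, ← e2]
    refine S.realize_iso _ _ _ ⟨biprod.desc (biprod.lift (𝟙 A) (-a)) biprod.inr,
      biprod.desc (biprod.lift (𝟙 A) a) biprod.inr, ?_, ?_⟩ (S.realize_zero A A') <;>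
    · apply biprod.hom_ext' <;> apply biprod.hom_ext <;>
        simp [biprod.lift_desc]
  have hTs := S.realize_sum x y δ (𝟙 A') w₀ δ₀ hT hT1A
  obtain ⟨E₇, h₀, h₇, d₇, e₇, δ₇, hTh, hTde, hh₀, hsq1, hsq2, hpd7, hpf7⟩ :=
    S.ET4 (biprod.lift (𝟙 A) (-a)) (biprod.desc a (𝟙 A')) (0 : S.E A' A)
      (biprod.map x (𝟙 A')) (biprod.map y w₀) _ hTv hTs
  have hd₇ : biprod.inr ≫ h₇ = d₇ := by
    have h' := congrArg (fun t => biprod.inr ≫ t) hsq1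
    simpa using h'.symm
  have hsqx : x ≫ biprod.inl ≫ h₇ = a ≫ d₇ := by
    have h' := congrArg (fun t => biprod.inl ≫ t) hsq1
    simpa using h'.symm
  have hbe : biprod.inl ≫ h₇ ≫ e₇ = y ≫ biprod.inl := by
    have h' := congrArg (fun t => biprod.inl ≫ t) hsq2
    simpa using h'.symm
  have hθ₇ : S.push (biprod.desc a (𝟙 A'))
      (S.push biprod.inl (S.pull biprod.fst δ) +
        S.push biprod.inr (S.pull biprod.snd δ₀))
      = S.pull biprod.fst (S.push a δ) := by
    rw [hδ₀, S.pull_zeroE, S.push_zeroE, add_zero, ← S.push_comp, biprod.inl_desc]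
    exact (S.pull_push _ _ _).symm
  have hTde' : S.IsTriangle d₇ e₇ (S.pull biprod.fst (S.push a δ)) := by
    rwa [hθ₇] at hTde
  have hsndW : (biprod.snd : X ⊞ W₀ ⟶ W₀) = 0 := by
    rw [← Category.comp_id (biprod.snd : X ⊞ W₀ ⟶ W₀), hW₀, comp_zero]
  have hfi1 : (biprod.fst : X ⊞ W₀ ⟶ X) ≫ biprod.inl = 𝟙 (X ⊞ W₀) := by
    rw [← biprod.total, hsndW, zero_comp, add_zero]
  have hTD0 : S.IsTriangle d₇ (e₇ ≫ biprod.fst)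
      (S.pull biprod.inl (S.pull biprod.fst (S.push a δ))) :=
    S.triangle_iso_cone hTde' biprod.fst biprod.inl hfi1 biprod.inl_fst
  have hTD : S.IsTriangle d₇ (e₇ ≫ biprod.fst) (S.pull c δ') := by
    have e : S.pull (biprod.inl : X ⟶ X ⊞ W₀) (S.pull (biprod.fst : X ⊞ W₀ ⟶ X) (S.push a δ)) = S.pull c δ' := by
      rw [← S.pull_comp, biprod.inl_fst, S.pull_id, hm3]
    rwa [e] at hTD0
  -- `b₂ = inl ≫ h₇` is a deflation, by (WIC)
  have hmap1a : S.IsDeflation (biprod.map (𝟙 B) a) :=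
    ⟨_, _, _, S.realize_sum iB (𝟙 B) δB k a κ hTidB hTa⟩
  have hcompdefl : S.IsDeflation (biprod.map (𝟙 B) a ≫ h₇) :=
    S.isDeflation_comp hmap1a ⟨_, _, _, hTh⟩
  have hfactor : biprod.map (𝟙 B) a ≫ h₇ = biprod.desc (𝟙 B) x ≫ (biprod.inl ≫ h₇) := by
    apply biprod.hom_ext'
    · simp
    · simp only [biprod.inr_map_assoc, biprod.inr_desc_assoc]
      rw [hd₇, hsqx]
  have hb₂defl : S.IsDeflation (biprod.inl ≫ h₇) := by
    refine hWIC.2 (biprod.desc (𝟙 B) x) (biprod.inl ≫ h₇) ?_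
    rw [← hfactor]; exact hcompdefl
  -- Step 2 : pull back `δ'` along the deflation `c`, by (ET4op)
  obtain ⟨Q, iQ, pQ, mQ, nQ, δQ, hTQ, hTmn, hpQ, hQ1, hQ2, hQ3, hQ4⟩ :=
    S.ET4op f c ε d₇ (e₇ ≫ biprod.fst) (S.pull c δ') hTc hTD
  have hmn0 : S.IsTriangle mQ nQ (0 : S.E F A') := by
    have e : S.pull f (S.pull c δ') = 0 := by
      rw [← S.pull_comp, S.comp_eq_zero hTc, S.zero_pullE]
    rwa [e] at hTmn
  obtain ⟨v, hviso, hv1, hv2⟩ := S.realization_iso hmn0 (S.realize_zero A' F)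
  haveI := hviso
  have hTQ2 : S.IsTriangle (inv v ≫ iQ) pQ (S.push v δQ) :=
    S.triangle_iso_fiber hTQ v (inv v) (IsIso.hom_inv_id v) (IsIso.inv_hom_id v)
  have hpullchat : S.pull c (S.push v δQ) = S.push biprod.inl (S.pull c δ') := by
    rw [S.pull_push, hQ4, ← S.push_comp, hv1]
  have hsndhat : S.push biprod.snd (S.push v δQ) = ε := by
    rw [← S.push_comp, hv2, hQ3]
  have hfsthat : S.pull c (S.push biprod.fst (S.push v δQ)) = S.pull c δ' := by
    rw [S.pull_push, hpullchat, ← S.push_comp, biprod.inl_fst, S.push_id]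
  obtain ⟨h, hhε⟩ := S.E_exact hTc (S.push biprod.fst (S.push v δQ) - δ')
    (by rw [S.pull_subE, hfsthat, sub_self])
  -- gauge change by an automorphism of `A' ⊞ F`
  have hωinv1 : (biprod.desc biprod.inl (biprod.lift (-h) (𝟙 F)) : A' ⊞ F ⟶ A' ⊞ F) ≫
      biprod.desc biprod.inl (biprod.lift h (𝟙 F)) = 𝟙 _ := by
    apply biprod.hom_ext' <;> apply biprod.hom_ext <;> simp [biprod.lift_desc]
  have hωinv2 : (biprod.desc biprod.inl (biprod.lift h (𝟙 F)) : A' ⊞ F ⟶ A' ⊞ F) ≫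
      biprod.desc biprod.inl (biprod.lift (-h) (𝟙 F)) = 𝟙 _ := by
    apply biprod.hom_ext' <;> apply biprod.hom_ext <;> simp [biprod.lift_desc]
  have hTQ3 : S.IsTriangle
      (biprod.desc biprod.inl (biprod.lift h (𝟙 F)) ≫ (inv v ≫ iQ)) pQ
      (S.push (biprod.desc biprod.inl (biprod.lift (-h) (𝟙 F))) (S.push v δQ)) :=
    S.triangle_iso_fiber hTQ2 _ _ hωinv1 hωinv2
  have hfstδ2 : S.push biprod.fst
      (S.push (biprod.desc biprod.inl (biprod.lift (-h) (𝟙 F))) (S.push v δQ)) = δ' := by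
    have hωfst : (biprod.desc biprod.inl (biprod.lift (-h) (𝟙 F)) : A' ⊞ F ⟶ A' ⊞ F) ≫
        biprod.fst = biprod.desc (𝟙 A') (-h) := by apply biprod.hom_ext' <;> simp
    have e1 : S.push (biprod.desc (𝟙 A') (-h))
        (S.push biprod.inl (S.push biprod.fst (S.push v δQ)))
        = S.push biprod.fst (S.push v δQ) := by
      rw [← S.push_comp, biprod.inl_desc, S.push_id]
    have e2 : S.push (biprod.desc (𝟙 A') (-h))
        (S.push biprod.inr (S.push biprod.snd (S.push v δQ)))
        = - S.push h ε := by
      rw [← S.push_comp, biprod.inr_desc, hsndhat, S.neg_pushE]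
    have e0 : S.push biprod.fst
        (S.push (biprod.desc biprod.inl (biprod.lift (-h) (𝟙 F))) (S.push v δQ))
        = S.push (biprod.desc (𝟙 A') (-h)) (S.push v δQ) := by
      rw [← S.push_comp, hωfst]
    have e3 : S.push (biprod.desc (𝟙 A') (-h)) (S.push v δQ)
        = S.push (biprod.desc (𝟙 A') (-h))
            (S.push biprod.inl (S.push biprod.fst (S.push v δQ)) +
              S.push biprod.inr (S.push biprod.snd (S.push v δQ))) := by
      rw [← S.E_decomp (S.push v δQ)]
    rw [e0, e3, S.push_add, e1, e2, ← hhε]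
    abel
  -- Step 3 : compose, by (ET4) applied to the split conflation and the pullback
  obtain ⟨E₁₀, h₁₀, h₁₀', d₁₀, e₁₀, δ₁₀, hTE1, hTE2, hhE, hEsq1, hEsq2, hpE, hpE2⟩ :=
    S.ET4 biprod.inr biprod.fst (0 : S.E A' F)
      (biprod.desc biprod.inl (biprod.lift h (𝟙 F)) ≫ (inv v ≫ iQ)) pQ
      (S.push (biprod.desc biprod.inl (biprod.lift (-h) (𝟙 F))) (S.push v δQ))
      (S.triangle_inr_fst A' F) hTQ3
  have hTE2' : S.IsTriangle d₁₀ e₁₀ δ' := by rwa [hfstδ2] at hTE2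
  have hinlv : (biprod.inl : A' ⟶ A' ⊞ F) ≫ inv v = mQ := by
    rw [← hv1, Category.assoc, IsIso.hom_inv_id, Category.comp_id]
  have hinlw : (biprod.inl : A' ⟶ A' ⊞ F) ≫
      (biprod.desc biprod.inl (biprod.lift h (𝟙 F)) ≫ (inv v ≫ iQ)) = d₇ := by
    rw [← Category.assoc, biprod.inl_desc, ← Category.assoc, hinlv]
    exact hQ2.symm
  have hd10 : d₇ ≫ h₁₀' = d₁₀ := by
    have h' : d₁₀ = d₇ ≫ h₁₀' := by
      calc d₁₀ = ((biprod.inl : A' ⟶ A' ⊞ F) ≫ (biprod.fst : A' ⊞ F ⟶ A')) ≫ d₁₀ := by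
            rw [biprod.inl_fst, Category.id_comp]
      _ = (biprod.inl : A' ⟶ A' ⊞ F) ≫ ((biprod.fst : A' ⊞ F ⟶ A') ≫ d₁₀) := by
            rw [Category.assoc]
      _ = (biprod.inl : A' ⟶ A' ⊞ F) ≫
            ((biprod.desc biprod.inl (biprod.lift h (𝟙 F)) ≫ (inv v ≫ iQ)) ≫ h₁₀') := by
            rw [hEsq1]
      _ = ((biprod.inl : A' ⟶ A' ⊞ F) ≫
            (biprod.desc biprod.inl (biprod.lift h (𝟙 F)) ≫ (inv v ≫ iQ))) ≫ h₁₀' := by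
            rw [← Category.assoc]
      _ = d₇ ≫ h₁₀' := by rw [hinlw]
    exact h'.symm
  obtain ⟨u, huiso, hu1, hu2⟩ := S.realization_iso hTE2' hT'
  have hgdefl : S.IsDeflation (h₁₀' ≫ u) :=
    S.isDeflation_comp ⟨_, _, _, hTE1⟩ (S.isDeflation_of_isIso hWIC u huiso)
  refine ⟨(biprod.inl ≫ h₇) ≫ (h₁₀' ≫ u), S.isDeflation_comp hb₂defl hgdefl, ?_, ?_, hm3⟩
  · calc x ≫ (biprod.inl ≫ h₇) ≫ (h₁₀' ≫ u)
        = (x ≫ (biprod.inl ≫ h₇)) ≫ (h₁₀' ≫ u) := by rw [← Category.assoc]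
    _ = (a ≫ d₇) ≫ (h₁₀' ≫ u) := by rw [hsqx]
    _ = a ≫ (d₇ ≫ h₁₀') ≫ u := by simp only [Category.assoc]
    _ = a ≫ d₁₀ ≫ u := by rw [hd10]
    _ = a ≫ x' := by rw [hu1]
  · have hbfst : (biprod.inl ≫ h₇) ≫ (e₇ ≫ biprod.fst) = y := by
      calc (biprod.inl ≫ h₇) ≫ (e₇ ≫ biprod.fst)
          = (biprod.inl ≫ h₇ ≫ e₇) ≫ biprod.fst := by simp only [Category.assoc]
      _ = (y ≫ biprod.inl) ≫ biprod.fst := by rw [hbe]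
      _ = y := by rw [Category.assoc, biprod.inl_fst, Category.comp_id]
    calc y ≫ c = ((biprod.inl ≫ h₇) ≫ (e₇ ≫ biprod.fst)) ≫ c := by rw [hbfst]
    _ = (biprod.inl ≫ h₇) ≫ pQ := by rw [Category.assoc, ← hpQ]
    _ = (biprod.inl ≫ h₇) ≫ (h₁₀' ≫ e₁₀) := by rw [hEsq2]
    _ = (biprod.inl ≫ h₇) ≫ (h₁₀' ≫ (u ≫ y')) := by rw [← hu2]
    _ = ((biprod.inl ≫ h₇) ≫ (h₁₀' ≫ u)) ≫ y' := by simp only [Category.assoc]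
end

section
/- Let (C, E, s) be an extriangulated category and A →x B →y C --δ--> an E-triangle. Then for any object X, the sequence Hom(C,X) → Hom(B,X) → Hom(A,X) → E(C,X) → E(B,X) → E(A,X) is exact, where the connecting map sends g: A → X to g_*δ. -/
open CategoryTheory Limits

universe w v u

section AuxLemmas

variable {𝒞 : Type u} [Category.{v} 𝒞] [Preadditive 𝒞] [HasBinaryBiproducts 𝒞]
  (S : ExtriangulatedStructure.{w} 𝒞)

lemma aux_push_zero {X A A' : 𝒞} (a : A ⟶ A') : S.push a (0 : S.E X A) = 0 := by
  have h := S.push_add a (0 : S.E X A) 0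
  rw [add_zero] at h
  exact left_eq_add.mp h

lemma aux_pull_zero {X' X A : 𝒞} (c : X' ⟶ X) : S.pull c (0 : S.E X A) = 0 := by
  have h := S.pull_add c (0 : S.E X A) 0
  rw [add_zero] at h
  exact left_eq_add.mp h

lemma aux_zero_push {X A A' : 𝒞} (δ : S.E X A) : S.push (0 : A ⟶ A') δ = 0 := by
  have h := S.add_push (0 : A ⟶ A') 0 δ
  rw [add_zero] at h
  exact left_eq_add.mp h

lemma aux_zero_pull {X' X A : 𝒞} (δ : S.E X A) : S.pull (0 : X' ⟶ X) δ = 0 := by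
  have h := S.add_pull (0 : X' ⟶ X) 0 δ
  rw [add_zero] at h
  exact left_eq_add.mp h

/-- The deflation of an `E`-triangle realizing `0` admits a retraction of its inflation. -/
lemma aux_retraction {T M A : 𝒞} {m : T ⟶ M} {n : M ⟶ A}
    (h : S.IsTriangle m n (0 : S.E A T)) : ∃ r : M ⟶ T, m ≫ r = 𝟙 T := by
  obtain ⟨b, hb1, hb2⟩ := S.realize_mor (𝟙 T) (𝟙 A) h (S.realize_zero T A)
    (by rw [S.push_id, S.pull_id])
  refine ⟨b ≫ biprod.fst, ?_⟩
  rw [← Category.assoc, hb1, Category.id_comp, biprod.inl_fst]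

/-- Covariant factorization: if a map into the base of an `E`-triangle pulls the class
back to zero, it factors through the deflation. -/
lemma aux_factor {T M C0 Z : 𝒞} {m : T ⟶ M} {e : M ⟶ C0} {ε : S.E C0 T}
    (h : S.IsTriangle m e ε) (g : Z ⟶ C0) (hg : S.pull g ε = 0) :
    ∃ k : Z ⟶ M, k ≫ e = g := by
  obtain ⟨b, hb1, hb2⟩ := S.realize_mor (𝟙 T) g (S.realize_zero T Z) h
    (by rw [S.push_id, hg])
  refine ⟨biprod.inr ≫ b, ?_⟩
  rw [Category.assoc, ← hb2, ← Category.assoc, biprod.inr_snd, Category.id_comp]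

/-- `push x δ = 0` for an `E`-triangle `(x, y, δ)`. -/
lemma aux_push_x {A B C0 : 𝒞} {x : A ⟶ B} {y : B ⟶ C0} {δ : S.E C0 A}
    (hT : S.IsTriangle x y δ) : S.push x δ = 0 := by
  obtain ⟨c, hc1, hc2⟩ := S.ET3 x (biprod.inl : B ⟶ B ⊞ C0) hT (S.realize_zero B C0) rfl
  rw [hc1, aux_pull_zero]

/-- `pull y δ = 0` for an `E`-triangle `(x, y, δ)`. -/
lemma aux_pull_y {A B C0 : 𝒞} {x : A ⟶ B} {y : B ⟶ C0} {δ : S.E C0 A}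
    (hT : S.IsTriangle x y δ) : S.pull y δ = 0 := by
  obtain ⟨a, ha1, ha2⟩ := S.ET3op (biprod.snd : A ⊞ B ⟶ B) y (S.realize_zero A B) hT rfl
  rw [← ha1, aux_push_zero]

/-- `x ≫ y = 0` for an `E`-triangle `(x, y, δ)`. -/
lemma aux_comp_zero {A B C0 : 𝒞} {x : A ⟶ B} {y : B ⟶ C0} {δ : S.E C0 A}
    (hT : S.IsTriangle x y δ) : x ≫ y = 0 := by
  obtain ⟨b, hb1, hb2⟩ := S.realize_mor x (𝟙 C0) hT (S.realize_zero B C0)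
    (by rw [aux_push_x S hT, S.pull_id])
  rw [Category.comp_id] at hb2
  rw [hb2, ← Category.assoc, hb1, Category.assoc, biprod.inl_snd, comp_zero]

end AuxLemmas

open CategoryTheory Limits in
/-- the contravariant long exact sequence associated to an E-triangle. -/
theorem stmt14 {𝒞 : Type u} [Category.{v} 𝒞] [Preadditive 𝒞] [HasBinaryBiproducts 𝒞]
    (S : ExtriangulatedStructure.{w} 𝒞)
    {A B C0 : 𝒞} (x : A ⟶ B) (y : B ⟶ C0) (δ : S.E C0 A)
    (hT : S.IsTriangle x y δ) (T : 𝒞) :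
    (∀ φ : B ⟶ T, x ≫ φ = 0 ↔ ∃ ψ : C0 ⟶ T, y ≫ ψ = φ) ∧
    (∀ φ : A ⟶ T, S.push φ δ = 0 ↔ ∃ ψ : B ⟶ T, x ≫ ψ = φ) ∧
    (∀ ε : S.E C0 T, S.pull y ε = 0 ↔ ∃ φ : A ⟶ T, S.push φ δ = ε) ∧
    (∀ ε : S.E B T, S.pull x ε = 0 ↔ ∃ ε' : S.E C0 T, S.pull y ε' = ε) := by
  have hxy : x ≫ y = 0 := aux_comp_zero S hT
  refine ⟨?_, ?_, ?_, ?_⟩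
  · intro φ
    constructor
    · intro hφ
      obtain ⟨c, hc1, hc2⟩ := S.ET3 x (biprod.lift (𝟙 B) φ : B ⟶ B ⊞ T) hT
        (S.realize_zero B T) (by ext <;> simp [hφ])
      refine ⟨c, ?_⟩
      rw [hc2, biprod.lift_snd]
    · rintro ⟨ψ, rfl⟩
      rw [← Category.assoc, hxy, zero_comp]
  · intro φ
    constructor
    · intro hφ
      obtain ⟨b, hb1, hb2⟩ := S.realize_mor φ (𝟙 C0) hT (S.realize_zero T C0)
        (by rw [hφ, aux_pull_zero])
      refine ⟨b ≫ biprod.fst, ?_⟩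
      rw [← Category.assoc, hb1, Category.assoc, biprod.inl_fst, Category.comp_id]
    · rintro ⟨ψ, rfl⟩
      rw [S.push_comp, aux_push_x S hT, aux_push_zero]
  · intro ε
    constructor
    · intro hε
      obtain ⟨M, m, e, hM⟩ := S.realize_exists ε
      obtain ⟨k, hk⟩ := aux_factor S hM y hε
      obtain ⟨a, ha1, ha2⟩ := S.ET3op k (𝟙 C0) hT hM (by rw [Category.comp_id, hk])
      exact ⟨a, by rw [ha1, S.pull_id]⟩
    · rintro ⟨φ, rfl⟩
      rw [S.pull_push, aux_pull_y S hT, aux_push_zero]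
  · intro ε
    constructor
    · intro hε
      obtain ⟨M, m, g, hM⟩ := S.realize_exists ε
      obtain ⟨E₀, i', p', m₀, n, δ'', h1, h2, h3, h4, h5, h6, h7⟩ :=
        S.ET4op x y δ m g ε hT hM
      rw [hε] at h2
      obtain ⟨r, hr⟩ := aux_retraction S h2
      refine ⟨S.push r δ'', ?_⟩
      rw [S.pull_push, h7, ← S.push_comp, hr, S.push_id]
    · rintro ⟨ε', rfl⟩
      rw [← S.pull_comp, hxy, aux_zero_pull]
end
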